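/- Let P ∈ ℝ^{n×n} be symmetric with 𝒜(P) = A − B R⁻¹ Bᵀ P Hurwitz, and let P' be the unique symmetric solution of the Lyapunov equation 𝒜(P)ᵀP' + P'𝒜(P) = −(Q + P B R⁻¹ Bᵀ P). Then ‖P' − P*‖_F ≤ ‖𝒫(𝒜(P))⁻¹‖₂ · ‖B R⁻¹ Bᵀ‖_F · ‖P − P*‖_F², where 𝒫(X) = Iₙ ⊗ Xᵀ + Xᵀ ⊗ Iₙ. -/

import Mathlib

open Matrix MeasureTheory Filter NormedSpace
open scoped Kronecker

noncomputable section

/-- A real square matrix is Hurwitz if every eigenvalue over `ℂ` has negative real part. -/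
def IsHurwitz {n : Type*} [Fintype n] [DecidableEq n] (X : Matrix n n ℝ) : Prop :=
  ∀ μ ∈ spectrum ℂ (X.map (algebraMap ℝ ℂ)), μ.re < 0

/-- The Frobenius norm of a real matrix. -/
def frobNorm {p q : Type*} [Fintype p] [Fintype q] (X : Matrix p q ℝ) : ℝ :=
  Real.sqrt (∑ i, ∑ j, (X i j) ^ 2)

/-- The spectral (ℓ²-operator) norm of a real matrix. -/
def spec2Norm {p q : Type*} [Fintype p] [Fintype q] [DecidableEq q] (X : Matrix p q ℝ) : ℝ :=
  ‖LinearMap.toContinuousLinearMap (Matrix.toEuclideanLin X)‖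

section KleinmanAux

open Polynomial

/-! ### Frobenius norm facts -/

section Frob

attribute [local instance] Matrix.frobeniusSeminormedAddCommGroup

lemma frobNorm_eq_norm {p q : Type*} [Fintype p] [Fintype q] (X : Matrix p q ℝ) :
    frobNorm X = ‖X‖ := by
  rw [Matrix.frobenius_norm_def, frobNorm, Real.sqrt_eq_rpow]
  congr 1
  refine Finset.sum_congr rfl fun i _ => Finset.sum_congr rfl fun j _ => ?_
  rw [Real.norm_eq_abs, Real.rpow_two, sq_abs]

lemma frobNorm_mul_le {p q r : Type*} [Fintype p] [Fintype q] [Fintype r]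
    (X : Matrix p q ℝ) (Y : Matrix q r ℝ) :
    frobNorm (X * Y) ≤ frobNorm X * frobNorm Y := by
  simp only [frobNorm_eq_norm]
  exact Matrix.frobenius_norm_mul X Y

lemma frobNorm_nonneg {p q : Type*} [Fintype p] [Fintype q] (X : Matrix p q ℝ) :
    0 ≤ frobNorm X := Real.sqrt_nonneg _

lemma frobNorm_neg {p q : Type*} [Fintype p] [Fintype q] (X : Matrix p q ℝ) :
    frobNorm (-X) = frobNorm X := by
  simp [frobNorm]

end Frob

lemma frobNorm_eq_vec {a b : Type*} [Fintype a] [Fintype b] (X : Matrix a b ℝ) :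
    frobNorm X = ‖(WithLp.equiv 2 ((a × b) → ℝ)).symm (fun p => X p.1 p.2)‖ := by
  rw [EuclideanSpace.norm_eq]
  simp [frobNorm, Fintype.sum_prod_type, Real.norm_eq_abs, sq_abs,
    WithLp.equiv_symm_apply, PiLp.toLp_apply]

/-! ### Vectorization of the Lyapunov operator -/

lemma kron_mulVec {n : ℕ} {R : Type*} [CommRing R] (X Y : Matrix (Fin n) (Fin n) R) :
    (((1 : Matrix (Fin n) (Fin n) R) ⊗ₖ Xᵀ + Xᵀ ⊗ₖ (1 : Matrix (Fin n) (Fin n) R)) *ᵥ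
      (fun p : Fin n × Fin n => Y p.1 p.2))
    = fun p => (Xᵀ * Y + Y * X) p.1 p.2 := by
  funext p
  obtain ⟨i, j⟩ := p
  simp only [mulVec, dotProduct, Matrix.add_apply, kroneckerMap_apply, Matrix.one_apply,
    Fintype.sum_prod_type, Matrix.mul_apply, add_mul, ite_mul, one_mul, zero_mul,
    Finset.sum_add_distrib, Finset.sum_ite_eq, Finset.mem_univ, if_pos, transpose_apply,
    mul_ite, mul_zero, Finset.sum_ite_eq']
  rw [Finset.sum_comm]
  simp only [Finset.sum_ite_eq, Finset.mem_univ, if_pos]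
  rw [add_comm]
  exact congrArg₂ (· + ·) (Finset.sum_congr rfl fun l _ => by ring)
    (Finset.sum_congr rfl fun l _ => by ring)

/-! ### Spectral facts -/

variable {n : ℕ}

lemma charpoly_transpose' (M : Matrix (Fin n) (Fin n) ℂ) : Mᵀ.charpoly = M.charpoly := by
  rw [Matrix.charpoly, Matrix.charpoly, ← Matrix.det_transpose (charmatrix M)]
  congr 1
  ext i j
  by_cases h : i = j
  · subst h; simp
  · simp [Matrix.charmatrix_apply_ne _ _ _ h, Matrix.charmatrix_apply_ne _ _ _ (Ne.symm h),
      Matrix.transpose_apply]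

lemma root_charpoly_mem_spectrum (M : Matrix (Fin n) (Fin n) ℂ) {μ : ℂ}
    (h : M.charpoly.eval μ = 0) : μ ∈ spectrum ℂ M := by
  rw [spectrum.mem_iff]
  rw [Matrix.isUnit_iff_isUnit_det]
  rw [isUnit_iff_ne_zero, ne_eq, not_not]
  have : (algebraMap ℂ (Matrix (Fin n) (Fin n) ℂ)) μ - M
      = (charmatrix M).map (Polynomial.evalRingHom μ) := by
    ext i j
    by_cases hij : i = j
    · subst hij; simp [Matrix.algebraMap_matrix_apply]
    · simp [Matrix.algebraMap_matrix_apply, hij, Matrix.charmatrix_apply_ne _ _ _ hij]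
  rw [this, show M.charmatrix.map ⇑(evalRingHom μ) = (evalRingHom μ).mapMatrix M.charmatrix
    from rfl, ← RingHom.map_det]
  simpa [Matrix.charpoly] using h

lemma lyap_unique_aux (hn : 0 < n) (X Y : Matrix (Fin n) (Fin n) ℂ)
    (hspec : ∀ μ ∈ spectrum ℂ X, μ.re < 0)
    (h : Xᵀ * Y + Y * X = 0) : Y = 0 := by
  have hstep : Xᵀ * Y = Y * (-X) := by
    rw [mul_neg]; exact eq_neg_of_add_eq_zero_left h
  have hpow : ∀ k : ℕ, (Xᵀ) ^ k * Y = Y * (-X) ^ k := by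
    intro k
    induction k with
    | zero => simp
    | succ k ih =>
        rw [pow_succ', mul_assoc, ih, ← mul_assoc, hstep, mul_assoc, ← pow_succ']
  have hpoly : ∀ p : ℂ[X], (aeval Xᵀ p) * Y = Y * (aeval (-X) p) := by
    intro p
    induction p using Polynomial.induction_on' with
    | add p q hp hq => rw [map_add, map_add, add_mul, mul_add, hp, hq]
    | monomial k a =>
        rw [Polynomial.aeval_monomial, Polynomial.aeval_monomial, mul_assoc, hpow,
          ← mul_assoc, Algebra.commutes, mul_assoc]
  set p := Xᵀ.charpoly with hp
  have hCH : aeval Xᵀ p = 0 := Matrix.aeval_self_charpoly _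
  have h0 : Y * (aeval (-X) p) = 0 := by rw [← hpoly, hCH, zero_mul]
  have hdeg : 0 < p.degree := by
    rw [hp, Matrix.charpoly_degree_eq_dim]
    simpa using hn
  have hunit : IsUnit (aeval (-X) p) := by
    by_contra hu
    have h00 : (0 : ℂ) ∈ spectrum ℂ (aeval (-X) p) := by
      rw [spectrum.mem_iff]; simpa using hu
    rw [spectrum.map_polynomial_aeval_of_degree_pos (-X) p hdeg] at h00
    obtain ⟨μ, hμ, hpμ⟩ := h00
    have h1 : μ ∈ spectrum ℂ X :=
      root_charpoly_mem_spectrum X (by rw [← charpoly_transpose']; exact hpμ)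
    have h2 : (-μ) ∈ spectrum ℂ X := by
      rw [spectrum.mem_iff] at hμ ⊢
      intro hcon
      apply hμ
      have heq : (algebraMap ℂ (Matrix (Fin n) (Fin n) ℂ)) μ - (-X)
          = -((algebraMap ℂ (Matrix (Fin n) (Fin n) ℂ)) (-μ) - X) := by
        rw [map_neg]; abel
      rw [heq]
      exact hcon.neg
    have ha := hspec μ h1
    have hb := hspec (-μ) h2
    rw [Complex.neg_re] at hb
    linarith
  exact hunit.mul_right_cancel (by rw [h0, zero_mul])

lemma lyap_unique (hn : 0 < n) (X Y : Matrix (Fin n) (Fin n) ℝ) (hX : IsHurwitz X)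
    (h : Xᵀ * Y + Y * X = 0) : Y = 0 := by
  have hc : (X.map (algebraMap ℝ ℂ))ᵀ * (Y.map (algebraMap ℝ ℂ))
      + (Y.map (algebraMap ℝ ℂ)) * (X.map (algebraMap ℝ ℂ)) = 0 := by
    have h2 := congrArg (algebraMap ℝ ℂ).mapMatrix h
    simp only [map_add, map_zero, RingHom.mapMatrix_apply] at h2
    rw [Matrix.map_mul, Matrix.map_mul, Matrix.transpose_map] at h2
    exact h2
  have h0 := lyap_unique_aux hn _ _ hX hc
  ext i j
  have := congrFun (congrFun h0 i) j
  simpa [Matrix.map_apply] using this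

lemma kron_det_isUnit (hn : 0 < n) (X : Matrix (Fin n) (Fin n) ℝ) (hX : IsHurwitz X) :
    IsUnit ((1 : Matrix (Fin n) (Fin n) ℝ) ⊗ₖ Xᵀ + Xᵀ ⊗ₖ (1 : Matrix (Fin n) (Fin n) ℝ)).det := by
  rw [isUnit_iff_ne_zero]
  intro hdet
  obtain ⟨v, hv, hmul⟩ := (Matrix.exists_mulVec_eq_zero_iff).mpr hdet
  set Y : Matrix (Fin n) (Fin n) ℝ := fun i j => v (i, j) with hY
  have hvec : (fun p : Fin n × Fin n => Y p.1 p.2) = v := by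
    funext p; obtain ⟨i, j⟩ := p; rfl
  have hz : Xᵀ * Y + Y * X = 0 := by
    have := kron_mulVec X Y
    rw [hvec, hmul] at this
    ext i j
    exact (congrFun this.symm (i, j))
  have := lyap_unique hn X Y hX hz
  apply hv
  funext p
  obtain ⟨i, j⟩ := p
  have := congrFun (congrFun this i) j
  simpa using this

/-! ### The algebraic identity -/

lemma key_alg (A S Q P P' Pstar : Matrix (Fin n) (Fin n) ℝ)
    (e1 : (A - S * P)ᵀ * P' + P' * (A - S * P) = -(Q + P * S * P))
    (e2 : Aᵀ * Pstar + Pstar * A - Pstar * S * Pstar + Q = 0)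
    (hPT : Pᵀ = P) (hST : Sᵀ = S) :
    (A - S * P)ᵀ * (P' - Pstar) + (P' - Pstar) * (A - S * P)
      = -((P - Pstar) * S * (P - Pstar)) := by
  have hXT : (A - S * P)ᵀ = Aᵀ - P * S := by
    rw [transpose_sub, transpose_mul, hPT, hST]
  rw [← sub_eq_zero]
  have expand : ((A - S * P)ᵀ * (P' - Pstar) + (P' - Pstar) * (A - S * P))
        - (-((P - Pstar) * S * (P - Pstar)))
      = ((A - S * P)ᵀ * P' + P' * (A - S * P) + (Q + P * S * P))
        - (Aᵀ * Pstar + Pstar * A - Pstar * S * Pstar + Q) := by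
    rw [hXT]; noncomm_ring
  rw [expand, e2, sub_zero, e1, neg_add_cancel]

end KleinmanAux

attribute [local instance] Matrix.normedAddCommGroup Matrix.normedSpace

/-- one-step quadratic convergence estimate for the exact Kleinman iteration. -/
theorem kleinman_step_quadratic_bound
    (n m : ℕ) (hn : 0 < n) (hm : 0 < m)
    (A : Matrix (Fin n) (Fin n) ℝ) (B : Matrix (Fin n) (Fin m) ℝ)
    (Q : Matrix (Fin n) (Fin n) ℝ) (R : Matrix (Fin m) (Fin m) ℝ)
    (hQ : Q.PosSemidef) (hR : R.PosDef)
    (Pstar : Matrix (Fin n) (Fin n) ℝ) (hPstar : Pstar.PosDef)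
    (hARE : Aᵀ * Pstar + Pstar * A - Pstar * B * R⁻¹ * Bᵀ * Pstar + Q = 0)
    (hAstar : IsHurwitz (A - B * R⁻¹ * Bᵀ * Pstar))
    (P P' : Matrix (Fin n) (Fin n) ℝ) (hP : P.IsSymm)
    (hHur : IsHurwitz (A - B * R⁻¹ * Bᵀ * P))
    (hP' : P'.IsSymm)
    (hLyap : (A - B * R⁻¹ * Bᵀ * P)ᵀ * P' + P' * (A - B * R⁻¹ * Bᵀ * P)
        = -(Q + P * B * R⁻¹ * Bᵀ * P)) :
    frobNorm (P' - Pstar)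
      ≤ spec2Norm ((1 : Matrix (Fin n) (Fin n) ℝ) ⊗ₖ (A - B * R⁻¹ * Bᵀ * P)ᵀ
            + (A - B * R⁻¹ * Bᵀ * P)ᵀ ⊗ₖ (1 : Matrix (Fin n) (Fin n) ℝ))⁻¹
          * frobNorm (B * R⁻¹ * Bᵀ) * frobNorm (P - Pstar) ^ 2 := by
  -- notation
  have hRT : Rᵀ = R := by simpa using hR.1.eq
  have hRinvT : (R⁻¹)ᵀ = R⁻¹ := by rw [Matrix.transpose_nonsing_inv, hRT]
  have hST : (B * R⁻¹ * Bᵀ)ᵀ = B * R⁻¹ * Bᵀ := by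
    rw [transpose_mul, transpose_mul, transpose_transpose, hRinvT, Matrix.mul_assoc]
  -- the algebraic identity
  have e1 : (A - (B * R⁻¹ * Bᵀ) * P)ᵀ * P' + P' * (A - (B * R⁻¹ * Bᵀ) * P)
      = -(Q + P * (B * R⁻¹ * Bᵀ) * P) := by
    rw [show -(Q + P * (B * R⁻¹ * Bᵀ) * P) = -(Q + P * B * R⁻¹ * Bᵀ * P) from by simp only [Matrix.mul_assoc]]
    rw [show A - (B * R⁻¹ * Bᵀ) * P = A - B * R⁻¹ * Bᵀ * P from by noncomm_ring]
    exact hLyap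
  have e2 : Aᵀ * Pstar + Pstar * A - Pstar * (B * R⁻¹ * Bᵀ) * Pstar + Q = 0 := by
    rw [show Aᵀ * Pstar + Pstar * A - Pstar * (B * R⁻¹ * Bᵀ) * Pstar + Q
        = Aᵀ * Pstar + Pstar * A - Pstar * B * R⁻¹ * Bᵀ * Pstar + Q from by
          simp only [Matrix.mul_assoc]]
    exact hARE
  have key := key_alg A (B * R⁻¹ * Bᵀ) Q P P' Pstar e1 e2 hP.eq hST
  rw [show A - (B * R⁻¹ * Bᵀ) * P = A - B * R⁻¹ * Bᵀ * P from by noncomm_ring] at key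
  -- vectorize
  set X := A - B * R⁻¹ * Bᵀ * P with hXdef
  set Mv := (1 : Matrix (Fin n) (Fin n) ℝ) ⊗ₖ Xᵀ + Xᵀ ⊗ₖ (1 : Matrix (Fin n) (Fin n) ℝ)
    with hMv
  have hdet : IsUnit Mv.det := kron_det_isUnit hn X hHur
  have hvec : Mv *ᵥ (fun p : Fin n × Fin n => (P' - Pstar) p.1 p.2)
      = (fun p : Fin n × Fin n =>
          (-((P - Pstar) * (B * R⁻¹ * Bᵀ) * (P - Pstar))) p.1 p.2) := by
    rw [hMv, kron_mulVec, key]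
  have hsolve : (fun p : Fin n × Fin n => (P' - Pstar) p.1 p.2)
      = Mv⁻¹ *ᵥ (fun p : Fin n × Fin n =>
          (-((P - Pstar) * (B * R⁻¹ * Bᵀ) * (P - Pstar))) p.1 p.2) := by
    rw [← hvec, Matrix.mulVec_mulVec, Matrix.nonsing_inv_mul _ hdet, Matrix.one_mulVec]
  -- norm estimates
  have step1 : frobNorm (P' - Pstar)
      ≤ spec2Norm Mv⁻¹ * frobNorm (-((P - Pstar) * (B * R⁻¹ * Bᵀ) * (P - Pstar))) := by
    rw [frobNorm_eq_vec, hsolve, frobNorm_eq_vec]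
    have hco : (LinearMap.toContinuousLinearMap (Matrix.toEuclideanLin Mv⁻¹))
        ((WithLp.equiv 2 ((Fin n × Fin n) → ℝ)).symm
          (fun p : Fin n × Fin n =>
            (-((P - Pstar) * (B * R⁻¹ * Bᵀ) * (P - Pstar))) p.1 p.2))
        = (WithLp.equiv 2 ((Fin n × Fin n) → ℝ)).symm
          (Mv⁻¹ *ᵥ (fun p : Fin n × Fin n =>
            (-((P - Pstar) * (B * R⁻¹ * Bᵀ) * (P - Pstar))) p.1 p.2)) := rfl
    have hle := (LinearMap.toContinuousLinearMap (Matrix.toEuclideanLin Mv⁻¹)).le_opNorm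
      ((WithLp.equiv 2 ((Fin n × Fin n) → ℝ)).symm
        (fun p : Fin n × Fin n =>
          (-((P - Pstar) * (B * R⁻¹ * Bᵀ) * (P - Pstar))) p.1 p.2))
    rw [hco] at hle
    exact hle
  have step2 : frobNorm (-((P - Pstar) * (B * R⁻¹ * Bᵀ) * (P - Pstar)))
      ≤ frobNorm (P - Pstar) * frobNorm (B * R⁻¹ * Bᵀ) * frobNorm (P - Pstar) := by
    rw [frobNorm_neg]
    calc frobNorm ((P - Pstar) * (B * R⁻¹ * Bᵀ) * (P - Pstar))
        ≤ frobNorm ((P - Pstar) * (B * R⁻¹ * Bᵀ)) * frobNorm (P - Pstar) :=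
          frobNorm_mul_le _ _
      _ ≤ frobNorm (P - Pstar) * frobNorm (B * R⁻¹ * Bᵀ) * frobNorm (P - Pstar) :=
          mul_le_mul_of_nonneg_right (frobNorm_mul_le _ _) (frobNorm_nonneg _)
  have hspec_nonneg : 0 ≤ spec2Norm Mv⁻¹ := norm_nonneg _
  calc frobNorm (P' - Pstar)
      ≤ spec2Norm Mv⁻¹ * frobNorm (-((P - Pstar) * (B * R⁻¹ * Bᵀ) * (P - Pstar))) := step1
    _ ≤ spec2Norm Mv⁻¹ * (frobNorm (P - Pstar) * frobNorm (B * R⁻¹ * Bᵀ)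
          * frobNorm (P - Pstar)) := mul_le_mul_of_nonneg_left step2 hspec_nonneg
    _ = spec2Norm Mv⁻¹ * frobNorm (B * R⁻¹ * Bᵀ) * frobNorm (P - Pstar) ^ 2 := by ring
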